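/- Let U_R = {ζ ∈ ℂ : |ζ| > R, |Arg(ζ) − π| < π/8} with a fixed branch of log. Suppose x, y ∈ U_R with |y| < |x|, and x₁ = x − 1 + a/x + b/y + E with |E| ≤ C(1/|x|² + 1/(|x||y|)). Then log(x₁) − log(x) = −1/x + E' where |E'| ≤ C'(1/|x|² + 1/(|x||y|)) for a constant C' depending only on a, b, C, R. -/

import Mathlib

open Real

/-- `U_R = {ζ : |ζ| > R, |Arg(ζ) − π| < π/8}`. -/
def Usector (R : ℝ) : Set ℂ :=
  {ζ : ℂ | R < ‖ζ‖ ∧ |Complex.arg (-ζ)| < π / 8}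

/-- The branch of the logarithm adapted to the sector `U_R` around the
negative real axis: `log ζ := Complex.log (−ζ) (+ iπ)`, fixed up to the additive
constant, which cancels in differences. -/
noncomputable def sectorLog (ζ : ℂ) : ℂ := Complex.log (-ζ)

set_option maxHeartbeats 1000000 in
/-- Estimate (a): if `x₁ = x − 1 + a/x + b/y + E` with
`|E| ≤ C(1/|x|² + 1/(|x||y|))`, then `log x₁ − log x = −1/x + E'` with
`|E'| ≤ C'(1/|x|² + 1/(|x||y|))`. -/
theorem log_first_coordinate_estimate (a b : ℂ) (C : ℝ) (hC : 0 < C) :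
    ∃ R₀ : ℝ, ∀ R : ℝ, R₀ ≤ R → ∃ C' > (0 : ℝ), ∀ x y x₁ E : ℂ,
      x ∈ Usector R → y ∈ Usector R → ‖y‖ < ‖x‖ →
      x₁ = x - 1 + a / x + b / y + E →
      ‖E‖ ≤ C * (1 / ‖x‖ ^ 2 + 1 / (‖x‖ * ‖y‖)) →
      ‖sectorLog x₁ - sectorLog x + 1 / x‖ ≤ C' * (1 / ‖x‖ ^ 2 + 1 / (‖x‖ * ‖y‖)) := by
  refine ⟨max 4 (4 * (‖a‖ + ‖b‖ + 2 * C)), fun R hR => ⟨‖a‖ + ‖b‖ + C + 4, by positivity,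
    fun x y x₁ E hx hy hyx hx₁ hE => ?_⟩⟩
  obtain ⟨hxR, hxarg⟩ := hx
  obtain ⟨hyR, _⟩ := hy
  set K : ℝ := ‖a‖ + ‖b‖ + 2 * C with hKdef
  have hKpos : 0 < K := by positivity
  have hR4 : (4 : ℝ) ≤ R := le_trans (le_max_left _ _) hR
  have hRab : 4 * K ≤ R := le_trans (le_max_right _ _) hR
  have hx4 : (4 : ℝ) ≤ ‖x‖ := le_trans hR4 hxR.le
  have hy4 : (4 : ℝ) ≤ ‖y‖ := le_trans hR4 hyR.le
  have hx4K : 4 * K ≤ ‖x‖ := le_trans hRab hxR.le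
  have hy4K : 4 * K ≤ ‖y‖ := le_trans hRab hyR.le
  have hxpos : (0 : ℝ) < ‖x‖ := by linarith
  have hypos : (0 : ℝ) < ‖y‖ := by linarith
  have hx0 : x ≠ 0 := by intro h; rw [h, norm_zero] at hx4; norm_num at hx4
  have hy0 : y ≠ 0 := by intro h; rw [h, norm_zero] at hy4; norm_num at hy4
  set S : ℝ := 1 / ‖x‖ ^ 2 + 1 / (‖x‖ * ‖y‖) with hS
  have hSpos : 0 < S := by positivity
  have hE' : ‖E‖ ≤ C * S := hE
  have h1 : 1 / ‖x‖ ^ 2 ≤ 1 / ‖x‖ := by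
    rw [div_le_div_iff₀ (by positivity) hxpos]; nlinarith
  have h2 : 1 / (‖x‖ * ‖y‖) ≤ 1 / ‖x‖ := by
    rw [div_le_div_iff₀ (by positivity) hxpos]; nlinarith
  have hSx : S ≤ 2 / ‖x‖ := by
    calc S ≤ 1 / ‖x‖ + 1 / ‖x‖ := add_le_add h1 h2
      _ = 2 / ‖x‖ := by ring
  have hES : ‖E‖ ≤ 2 * C / ‖x‖ := by
    calc ‖E‖ ≤ C * S := hE'
      _ ≤ C * (2 / ‖x‖) := by nlinarith
      _ = 2 * C / ‖x‖ := by ring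
  -- w = (x₁ - x)/x, treated opaquely
  obtain ⟨w, hw⟩ : ∃ w : ℂ, w = (x₁ - x) / x := ⟨_, rfl⟩
  have hx₁x : x₁ - x = -1 + a / x + b / y + E := by rw [hx₁]; ring
  have hnx₁x : ‖x₁ - x‖ ≤ 2 := by
    rw [hx₁x]
    have hax : ‖a / x‖ ≤ ‖a‖ / (4 * K) := by
      rw [norm_div]
      exact div_le_div_of_nonneg_left (norm_nonneg a) (by positivity) hx4K
    have hby : ‖b / y‖ ≤ ‖b‖ / (4 * K) := by
      rw [norm_div]
      exact div_le_div_of_nonneg_left (norm_nonneg b) (by positivity) hy4K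
    have hEx : ‖E‖ ≤ 2 * C / (4 * K) := by
      refine hES.trans ?_
      exact div_le_div_of_nonneg_left (by positivity) (by positivity) hx4K
    have hsum : ‖a‖ / (4 * K) + ‖b‖ / (4 * K) + 2 * C / (4 * K) = 1 / 4 := by
      rw [hKdef]; field_simp
    calc ‖-1 + a / x + b / y + E‖ ≤ ‖(-1 : ℂ)‖ + ‖a / x‖ + ‖b / y‖ + ‖E‖ := by
          refine le_trans (norm_add_le _ _) (add_le_add ?_ le_rfl)
          exact le_trans (norm_add_le _ _) (add_le_add (norm_add_le _ _) le_rfl)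
      _ ≤ 1 + (‖a‖ / (4 * K) + ‖b‖ / (4 * K) + 2 * C / (4 * K)) := by
          simp only [norm_neg, norm_one]; linarith
      _ = 1 + 1 / 4 := by rw [hsum]
      _ ≤ 2 := by norm_num
  have hwle : ‖w‖ ≤ 2 / ‖x‖ := by
    rw [hw, norm_div]; gcongr
  have hwhalf : ‖w‖ ≤ 1 / 2 := by
    refine hwle.trans ?_
    rw [div_le_div_iff₀ hxpos (by norm_num)]; linarith
  have hw1 : ‖w‖ < 1 := lt_of_le_of_lt hwhalf (by norm_num)
  -- 1 + w and its argument
  have h1w : (1 : ℂ) + w = x₁ / x := by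
    rw [hw]; field_simp; ring
  have hre : 0 < ((1 : ℂ) + w).re := by
    have h := abs_le.mp (Complex.abs_re_le_norm w)
    simp only [Complex.add_re, Complex.one_re]
    have : -(1/2 : ℝ) ≤ w.re := by
      have := h.1
      have : -‖w‖ ≤ w.re := h.1
      linarith
    linarith
  have h1w0 : (1 : ℂ) + w ≠ 0 := by
    intro h; rw [h] at hre; simp at hre
  have harg1w : |Complex.arg (1 + w)| < π / 2 :=
    Complex.abs_arg_lt_pi_div_two_iff.mpr (Or.inl hre)
  -- log splitting
  have hprod : -x₁ = -x * (1 + w) := by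
    rw [h1w]; field_simp
  have hlogsplit : Complex.log (-x₁) = Complex.log (-x) + Complex.log (1 + w) := by
    rw [hprod]
    refine Complex.log_mul (neg_ne_zero.mpr hx0) h1w0 ?_
    have hpi : 0 < π := Real.pi_pos
    constructor
    · linarith [(abs_lt.mp hxarg).1, (abs_lt.mp harg1w).1]
    · linarith [(abs_lt.mp hxarg).2, (abs_lt.mp harg1w).2]
  -- main decomposition
  have hwval : w + 1 / x = a / x ^ 2 + b / (x * y) + E / x := by
    rw [hw, hx₁x]
    field_simp
    ring
  have hdecomp : sectorLog x₁ - sectorLog x + 1 / x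
      = (Complex.log (1 + w) - w) + (a / x ^ 2 + b / (x * y) + E / x) := by
    rw [sectorLog, sectorLog, hlogsplit, ← hwval]
    ring
  rw [hdecomp]
  -- bounds
  have hlogbound : ‖Complex.log (1 + w) - w‖ ≤ ‖w‖ ^ 2 := by
    refine (Complex.norm_log_one_add_sub_self_le hw1).trans ?_
    have h1 : (1 - ‖w‖)⁻¹ ≤ 2 := by
      rw [inv_le_comm₀ (by linarith) (by norm_num)]
      linarith
    nlinarith [sq_nonneg ‖w‖]
  have hw2 : ‖w‖ ^ 2 ≤ 4 / ‖x‖ ^ 2 := by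
    calc ‖w‖ ^ 2 ≤ (2 / ‖x‖) ^ 2 := pow_le_pow_left₀ (norm_nonneg w) hwle 2
      _ = 4 / ‖x‖ ^ 2 := by rw [div_pow]; norm_num
  have hS1 : 1 / ‖x‖ ^ 2 ≤ S := by
    rw [hS]; have : 0 ≤ 1 / (‖x‖ * ‖y‖) := by positivity
    linarith
  have hS2 : 1 / (‖x‖ * ‖y‖) ≤ S := by
    rw [hS]; have : 0 ≤ 1 / ‖x‖ ^ 2 := by positivity
    linarith
  have hb1 : ‖Complex.log (1 + w) - w‖ ≤ 4 * S := by
    refine hlogbound.trans (hw2.trans ?_)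
    have h4 : 4 / ‖x‖ ^ 2 = 4 * (1 / ‖x‖ ^ 2) := by ring
    rw [h4]; nlinarith
  have hb2 : ‖a / x ^ 2‖ ≤ ‖a‖ * S := by
    rw [norm_div, norm_pow]
    calc ‖a‖ / ‖x‖ ^ 2 = ‖a‖ * (1 / ‖x‖ ^ 2) := by ring
      _ ≤ ‖a‖ * S := by nlinarith [norm_nonneg a]
  have hb3 : ‖b / (x * y)‖ ≤ ‖b‖ * S := by
    rw [norm_div, norm_mul]
    calc ‖b‖ / (‖x‖ * ‖y‖) = ‖b‖ * (1 / (‖x‖ * ‖y‖)) := by ring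
      _ ≤ ‖b‖ * S := by nlinarith [norm_nonneg b]
  have hb4 : ‖E / x‖ ≤ C * S := by
    rw [norm_div]
    calc ‖E‖ / ‖x‖ ≤ ‖E‖ := by
          rw [div_le_iff₀ hxpos]; nlinarith [norm_nonneg E]
      _ ≤ C * S := hE'
  calc ‖Complex.log (1 + w) - w + (a / x ^ 2 + b / (x * y) + E / x)‖
      ≤ ‖Complex.log (1 + w) - w‖ + (‖a / x ^ 2‖ + ‖b / (x * y)‖ + ‖E / x‖) := by
        refine le_trans (norm_add_le _ _) (add_le_add le_rfl ?_)
        exact le_trans (norm_add_le _ _) (add_le_add (norm_add_le _ _) le_rfl)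
    _ ≤ 4 * S + (‖a‖ * S + ‖b‖ * S + C * S) :=
        add_le_add hb1 (add_le_add (add_le_add hb2 hb3) hb4)
    _ = (‖a‖ + ‖b‖ + C + 4) * S := by ring
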